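/- Let A be an algebra with unit, and suppose 1 ∈ B_d Y₀ X₀ B_d for subspaces B_d, Y₀, X₀ of appropriate (bi)modules in a Morita context, and for a nonzero a ∈ A we have 1_A ∈ A_j a A_j. If Y₀ A_j ⊆ B_{cj} Y₀ and A_j X₀ ⊆ X₀ B_{cj}, then 1_B ∈ B_{cj+d} Y₀ a X₀ B_{cj+d}. -/
import Mathlib


/-- In a Morita context `(A, X; Y, B)` with filtrations `{Aᵢ}` on `A` and `{Bᵢ}`
on `B` and finite-dimensional generating subspaces `X₀ ⊆ X`, `Y₀ ⊆ Y`: if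
`1_B ∈ B_d Y₀ X₀ B_d`, and for a nonzero `a ∈ A` one has `1_A ∈ A_j a A_j`, and
`Y₀ A_j ⊆ B_{cj} Y₀` and `A_j X₀ ⊆ X₀ B_{cj}`, then
`1_B ∈ B_{cj+d} Y₀ a X₀ B_{cj+d}` (products of subspaces denote `K`-spans). -/
theorem one_mem_filtration_pairing
    (K A B X Y : Type*) [Field K] [Ring A] [Algebra K A] [Ring B] [Algebra K B]
    [AddCommGroup X] [Module K X] [Module A X] [IsScalarTower K A X]
    [Module Bᵐᵒᵖ X] [SMulCommClass K Bᵐᵒᵖ X]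
    [AddCommGroup Y] [Module K Y] [Module B Y] [IsScalarTower K B Y]
    [Module Aᵐᵒᵖ Y] [SMulCommClass K Aᵐᵒᵖ Y]
    (ν : Y →ₗ[K] X →ₗ[K] B)
    (hνl : ∀ (b : B) (y : Y) (x : X), ν (b • y) x = b * ν y x)
    (hνr : ∀ (b : B) (y : Y) (x : X), ν y (MulOpposite.op b • x) = ν y x * b)
    (hνbal : ∀ (a : A) (y : Y) (x : X), ν (MulOpposite.op a • y) x = ν y (a • x))
    (Af : ℕ → Submodule K A) (Bf : ℕ → Submodule K B)
    (hAmul : ∀ i j, Af i * Af j ≤ Af (i + j))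
    (hBmul : ∀ i j, Bf i * Bf j ≤ Bf (i + j))
    (hAmono : Monotone Af) (hBmono : Monotone Bf)
    (X₀ : Submodule K X) (Y₀ : Submodule K Y)
    (c d j : ℕ) (a : A) (ha : a ≠ 0)
    (h1B : (1 : B) ∈ Bf d * Submodule.span K {z : B | ∃ y ∈ Y₀, ∃ x ∈ X₀, z = ν y x} * Bf d)
    (h1A : (1 : A) ∈ Af j * Submodule.span K {a} * Af j)
    (hYA : Submodule.span K {z : Y | ∃ a' ∈ Af j, ∃ y ∈ Y₀, z = MulOpposite.op a' • y} ≤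
      Submodule.span K {z : Y | ∃ b ∈ Bf (c * j), ∃ y ∈ Y₀, z = b • y})
    (hAX : Submodule.span K {z : X | ∃ a' ∈ Af j, ∃ x ∈ X₀, z = a' • x} ≤
      Submodule.span K {z : X | ∃ b ∈ Bf (c * j), ∃ x ∈ X₀, z = MulOpposite.op b • x}) :
    (1 : B) ∈ Bf (c * j + d) *
      Submodule.span K {z : B | ∃ y ∈ Y₀, ∃ x ∈ X₀, z = ν (MulOpposite.op a • y) x} *
      Bf (c * j + d) := by

  classical
  set Sa := Submodule.span K {z : B | ∃ y ∈ Y₀, ∃ x ∈ X₀, z = ν (MulOpposite.op a • y) x}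
    with hSadef
  have haK : ∀ (k : K) (a' : A) (x' : X), a' • (k • x') = k • (a' • x') := by
    intro k a' x'
    rw [← algebraMap_smul A k x', ← mul_smul, ← Algebra.commutes k a', mul_smul,
      algebraMap_smul]
  -- bilinear span lemma
  have gen : ∀ y' ∈ Submodule.span K {z : Y | ∃ b ∈ Bf (c * j), ∃ y ∈ Y₀, z = b • y},
      ∀ x' ∈ Submodule.span K {z : X | ∃ b ∈ Bf (c * j), ∃ x ∈ X₀, z = MulOpposite.op b • x},
      ν y' (a • x') ∈ Bf (c * j) * Sa * Bf (c * j) := by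
    intro y' hy'
    induction hy' using Submodule.span_induction with
    | mem z hz =>
      obtain ⟨b, hb, y₀, hy₀, rfl⟩ := hz
      intro x' hx'
      induction hx' using Submodule.span_induction with
      | mem w hw =>
        obtain ⟨b', hb', x₀, hx₀, rfl⟩ := hw
        have hcalc : ν (b • y₀) (a • MulOpposite.op b' • x₀)
            = b * ν (MulOpposite.op a • y₀) x₀ * b' := by
          rw [hνl, ← hνbal, hνr, mul_assoc]
        rw [hcalc]
        exact Submodule.mul_mem_mul
          (Submodule.mul_mem_mul hb (Submodule.subset_span ⟨y₀, hy₀, x₀, hx₀, rfl⟩)) hb'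
      | zero => simp
      | add u v hu hv ihu ihv =>
        rw [smul_add, map_add]
        exact Submodule.add_mem _ ihu ihv
      | smul k' u hu ihu =>
        rw [haK, map_smul]
        exact Submodule.smul_mem _ k' ihu
    | zero => intro x' _; simp
    | add u v hu hv ihu ihv =>
      intro x' hx'
      rw [map_add, LinearMap.add_apply]
      exact Submodule.add_mem _ (ihu x' hx') (ihv x' hx')
    | smul k' u hu ihu =>
      intro x' hx'
      rw [map_smul ν k' u, LinearMap.smul_apply]
      exact Submodule.smul_mem _ k' (ihu x' hx')
  -- key inclusion
  have key : Submodule.span K {z : B | ∃ y ∈ Y₀, ∃ x ∈ X₀, z = ν y x} ≤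
      Bf (c * j) * Sa * Bf (c * j) := by
    rw [Submodule.span_le]
    rintro _ ⟨y, hy, x, hx, rfl⟩
    have h1 : ν y x = ν y ((1 : A) • x) := by rw [one_smul]
    rw [h1]
    have main : ∀ a' ∈ Af j * Submodule.span K {a} * Af j,
        ν y (a' • x) ∈ Bf (c * j) * Sa * Bf (c * j) := by
      intro a' ha'
      refine Submodule.mul_induction_on ha' ?_ ?_
      · intro m hm a₂ ha₂
        refine Submodule.mul_induction_on hm ?_ ?_
        · intro a₁ ha₁ t ht
          obtain ⟨k, rfl⟩ := Submodule.mem_span_singleton.mp ht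
          have hrw : (a₁ * k • a * a₂) • x = k • (a₁ • (a • (a₂ • x))) := by
            rw [mul_smul_comm, smul_mul_assoc, smul_assoc, mul_smul, mul_smul]
          rw [hrw, map_smul]
          refine Submodule.smul_mem _ k ?_
          rw [← hνbal]
          exact gen _ (hYA (Submodule.subset_span ⟨a₁, ha₁, y, hy, rfl⟩))
            _ (hAX (Submodule.subset_span ⟨a₂, ha₂, x, hx, rfl⟩))
        · intro u v ihu ihv
          rw [add_mul, add_smul, map_add]
          exact Submodule.add_mem _ ihu ihv
      · intro u v ihu ihv
        rw [add_smul, map_add]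
        exact Submodule.add_mem _ ihu ihv
    exact main 1 h1A
  -- conclude
  have step : Bf d * Submodule.span K {z : B | ∃ y ∈ Y₀, ∃ x ∈ X₀, z = ν y x} * Bf d ≤
      Bf (c * j + d) * Sa * Bf (c * j + d) := by
    calc Bf d * Submodule.span K {z : B | ∃ y ∈ Y₀, ∃ x ∈ X₀, z = ν y x} * Bf d
        ≤ Bf d * (Bf (c * j) * Sa * Bf (c * j)) * Bf d :=
          mul_le_mul' (mul_le_mul' le_rfl key) le_rfl
      _ = (Bf d * Bf (c * j)) * Sa * (Bf (c * j) * Bf d) := by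
          rw [mul_assoc (Bf d), mul_assoc (Bf d), ← mul_assoc, ← mul_assoc, ← mul_assoc,
            mul_assoc (Bf d * Bf (c * j) * Sa)]
      _ ≤ Bf (d + (c * j)) * Sa * Bf (c * j + d) :=
          mul_le_mul' (mul_le_mul' (hBmul _ _) le_rfl) (hBmul _ _)
      _ = Bf (c * j + d) * Sa * Bf (c * j + d) := by rw [Nat.add_comm d]
  exact step h1B
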